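/- Let K be a field, Λ a finite-dimensional K-algebra with Jacobson radical J, let e and f be primitive idempotents of Λ, and let a be a nonzero element of fJe (so that in particular a = ae, hence the left ideal Λa is contained in the left ideal Λe). Then the left Λ-module Λe/Λa is indecomposable and is not projective. -/

import Mathlib

/-- A module is *uniserial* if its submodules are totally ordered by inclusion. -/
def IsUniserialModule (R M : Type) [Ring R] [AddCommGroup M] [Module R M] : Prop :=
  ∀ N₁ N₂ : Submodule R M, N₁ ≤ N₂ ∨ N₂ ≤ N₁

/-- The Jacobson radical of the ring `R` (the intersection of the maximal left ideals). -/
noncomputable def ringJacobson (R : Type) [Ring R] : Ideal R :=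
  Ideal.jacobson (⊥ : Ideal R)

/-- The submodule `J•M`, where `J` is the Jacobson radical of `R`. -/
noncomputable def radicalSubmodule (R M : Type) [Ring R] [AddCommGroup M] [Module R M] :
    Submodule R M :=
  ringJacobson R • (⊤ : Submodule R M)

/-- The socle of a module: the sum of all of its simple submodules. -/
def socle (R M : Type) [Ring R] [AddCommGroup M] [Module R M] : Submodule R M :=
  sSup {N : Submodule R M | IsSimpleModule R ↥N}

/-- A linear map is a split monomorphism if it has a left inverse. -/
def IsSplitMono {R M N : Type} [Ring R] [AddCommGroup M] [Module R M]
    [AddCommGroup N] [Module R N] (f : M →ₗ[R] N) : Prop :=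
  ∃ g : N →ₗ[R] M, g ∘ₗ f = LinearMap.id

/-- A linear map is a split epimorphism if it has a right inverse. -/
def IsSplitEpi {R M N : Type} [Ring R] [AddCommGroup M] [Module R M]
    [AddCommGroup N] [Module R N] (f : M →ₗ[R] N) : Prop :=
  ∃ g : N →ₗ[R] M, f ∘ₗ g = LinearMap.id

/-- A linear map `f : M → N` is *irreducible* if it is neither a split monomorphism nor a
split epimorphism, and in any factorization `f = g ∘ h`, either `h` is a split monomorphism
or `g` is a split epimorphism. -/
def IsIrreducibleMap {R M N : Type} [Ring R] [AddCommGroup M] [Module R M]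
    [AddCommGroup N] [Module R N] (f : M →ₗ[R] N) : Prop :=
  ¬ IsSplitMono f ∧ ¬ IsSplitEpi f ∧
    ∀ (X : Type) [AddCommGroup X] [Module R X] (h : M →ₗ[R] X) (g : X →ₗ[R] N),
      g ∘ₗ h = f → IsSplitMono h ∨ IsSplitEpi g

/-- A module is *indecomposable* if it is nonzero and is not the internal direct sum of two
nonzero submodules. -/
def IsIndecomposableModule (R M : Type) [Ring R] [AddCommGroup M] [Module R M] : Prop :=
  Nontrivial M ∧ ∀ N₁ N₂ : Submodule R M, IsCompl N₁ N₂ → N₁ = ⊥ ∨ N₂ = ⊥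

/-- The composition length of a module, as the Krull dimension of its lattice of
submodules (the supremum of the lengths of strictly increasing chains of submodules). -/
noncomputable def moduleLength (R M : Type) [Ring R] [AddCommGroup M] [Module R M] :
    WithBot ℕ∞ :=
  Order.krullDim (Submodule R M)

/-- `0 → A →f B →g C → 0` is an *almost split sequence* if it is a non-split short exact
sequence, `A` and `C` are indecomposable, and every linear map `h : X → C` which is not a
split epimorphism factors through `g`. -/
def IsAlmostSplitSequence {Λ A B C : Type} [Ring Λ]
    [AddCommGroup A] [Module Λ A] [AddCommGroup B] [Module Λ B]
    [AddCommGroup C] [Module Λ C]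
    (f : A →ₗ[Λ] B) (g : B →ₗ[Λ] C) : Prop :=
  Function.Injective f ∧ Function.Surjective g ∧ LinearMap.range f = LinearMap.ker g ∧
    ¬ IsSplitEpi g ∧ IsIndecomposableModule Λ A ∧ IsIndecomposableModule Λ C ∧
    ∀ (X : Type) [AddCommGroup X] [Module Λ X] (h : X →ₗ[Λ] C),
      ¬ IsSplitEpi h → ∃ h' : X →ₗ[Λ] B, g ∘ₗ h' = h

/-- An idempotent `e` is *primitive* if `e ≠ 0` and `e` cannot be written as a sum of two
nonzero orthogonal idempotents. -/
def IsPrimitiveIdempotent {Λ : Type} [Ring Λ] (e : Λ) : Prop :=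
  IsIdempotentElem e ∧ e ≠ 0 ∧
    ¬ ∃ e₁ e₂ : Λ, IsIdempotentElem e₁ ∧ IsIdempotentElem e₂ ∧ e₁ ≠ 0 ∧ e₂ ≠ 0 ∧
      e₁ * e₂ = 0 ∧ e₂ * e₁ = 0 ∧ e = e₁ + e₂

/-- The quotient `Λe/Λa` of the left ideal `Λe` by its submodule `Λa`
(for `a ∈ Λe`, so that `Λa ⊆ Λe`). -/
abbrev cyclicQuot (Λ : Type) [Ring Λ] (e a : Λ) : Type :=
  ↥(Ideal.span ({e} : Set Λ)) ⧸
    (Submodule.comap (Ideal.span ({e} : Set Λ)).subtype (Ideal.span ({a} : Set Λ)))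


open Submodule

section Aux

variable {Λ : Type} [Ring Λ]

private lemma jac_left_inv {x : Λ} (hx : x ∈ Ideal.jacobson (⊥ : Ideal Λ)) :
    ∃ z, z * (1 - x) = 1 := by
  obtain ⟨z, hz⟩ := Ideal.mem_jacobson_iff.mp hx (-1)
  rw [Ideal.mem_bot] at hz
  refine ⟨z, ?_⟩
  have h1 : z * -1 * x = -(z * x) := by rw [mul_neg_one, neg_mul]
  rw [h1] at hz
  have h2 : z - z * x = 1 := by
    rw [← neg_add_eq_sub]
    exact sub_eq_zero.mp hz
  rw [mul_sub, mul_one, h2]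

private lemma jac_mul_right {x : Λ} (hx : x ∈ Ideal.jacobson (⊥ : Ideal Λ)) (y : Λ) :
    x * y ∈ Ideal.jacobson (⊥ : Ideal Λ) :=
  Ideal.mul_mem_right y _ hx

variable {M : Type} [AddCommGroup M] [Module Λ M]

private lemma nakayama_span (s : Finset M)
    (h : (span Λ (s : Set M)) ≤ Ideal.jacobson (⊥ : Ideal Λ) • span Λ (s : Set M)) :
    span Λ (s : Set M) = ⊥ := by
  classical
  induction s using Finset.induction with
  | empty => simp
  | @insert x₀ t hx₀ ih =>
    rw [Finset.coe_insert] at h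
    set J := Ideal.jacobson (⊥ : Ideal Λ) with hJdef
    -- the submodule of J-multiples of x₀
    let T₀ : Submodule Λ M :=
      { carrier := {m | ∃ c ∈ J, c • x₀ = m}
        add_mem' := by
          rintro _ _ ⟨c, hc, rfl⟩ ⟨d, hd, rfl⟩
          exact ⟨c + d, J.add_mem hc hd, (add_smul c d x₀)⟩
        zero_mem' := ⟨0, J.zero_mem, zero_smul _ _⟩
        smul_mem' := by
          rintro r _ ⟨c, hc, rfl⟩
          exact ⟨r * c, J.smul_mem r hc, (mul_smul r c x₀)⟩ }
    have hkey : J • span Λ (insert x₀ (t : Set M)) ≤ T₀ ⊔ span Λ (t : Set M) := by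
      refine smul_le.mpr ?_
      intro a ha n hn
      obtain ⟨c, w, hw, rfl⟩ := mem_span_insert.mp hn
      have : a • (c • x₀ + w) = (a * c) • x₀ + a • w := by
        rw [smul_add, mul_smul]
      rw [this]
      exact add_mem_sup ⟨a * c, jac_mul_right ha c, rfl⟩ (smul_mem _ a hw)
    have hx₀mem : x₀ ∈ T₀ ⊔ span Λ (t : Set M) :=
      hkey (h (subset_span (Set.mem_insert x₀ _)))
    obtain ⟨y, ⟨c, hc, rfl⟩, w, hw, hsum⟩ := mem_sup.mp hx₀mem
    have hw' : (1 - c) • x₀ = w := by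
      rw [sub_smul, one_smul]
      exact sub_eq_iff_eq_add'.mpr hsum.symm
    obtain ⟨z, hz⟩ := jac_left_inv hc
    have : x₀ ∈ span Λ (t : Set M) := by
      have : x₀ = z • ((1 - c) • x₀) := by rw [← mul_smul, hz, one_smul]
      rw [this, hw']
      exact smul_mem _ z hw
    rw [Finset.coe_insert]
    rw [span_insert_eq_span this] at h ⊢
    exact ih h

private lemma nakayama_fg {N : Submodule Λ M} (hfg : N.FG)
    (h : N ≤ Ideal.jacobson (⊥ : Ideal Λ) • N) : N = ⊥ := by
  obtain ⟨s, rfl⟩ := hfg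
  exact nakayama_span s h

end Aux

open Submodule

section Aux2

variable (Λ : Type) [Ring Λ] (M : Type) [AddCommGroup M] [Module Λ M]

private noncomputable def radIter : ℕ → Submodule Λ M
  | 0 => ⊤
  | (n + 1) => Ideal.jacobson (⊥ : Ideal Λ) • radIter n

variable {Λ M}

private lemma radIter_succ (n : ℕ) :
    radIter Λ M (n + 1) = Ideal.jacobson (⊥ : Ideal Λ) • radIter Λ M n := rfl

private lemma smul_jac_le_self (N : Submodule Λ M) :
    Ideal.jacobson (⊥ : Ideal Λ) • N ≤ N :=
  smul_le.mpr fun a _ n hn => N.smul_mem a hn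

private lemma nakayama_fg' {N : Submodule Λ M} (hfg : N.FG)
    (h : N ≤ Ideal.jacobson (⊥ : Ideal Λ) • N) : N = ⊥ := by
  obtain ⟨s, rfl⟩ := hfg
  exact nakayama_span s h

private lemma exists_radIter_eq_bot (K : Type) [Field K] [Algebra K Λ]
    [Module K M] [IsScalarTower K Λ M] [FiniteDimensional K M] :
    ∃ n, radIter Λ M n = ⊥ := by
  have hnoeth : IsNoetherian Λ M := isNoetherian_of_tower K inferInstance
  by_contra hcon
  push_neg at hcon
  have hdesc : ∀ n, radIter Λ M (n + 1) < radIter Λ M n := by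
    intro n
    refine lt_of_le_of_ne (smul_jac_le_self _) ?_
    intro heq
    exact hcon n (nakayama_fg' (IsNoetherian.noetherian _) (le_of_eq heq.symm))
  set g : ℕ → ℕ := fun n =>
    Module.finrank K (Submodule.restrictScalarsEmbedding K Λ M (radIter Λ M n)) with hg
  have hgdesc : ∀ n, g (n + 1) < g n := fun n =>
    Submodule.finrank_lt_finrank_of_lt
      ((Submodule.restrictScalarsEmbedding K Λ M).strictMono (hdesc n))
  have hbound : ∀ n, g n + n ≤ g 0 := by
    intro n
    induction n with
    | zero => omega
    | succ k ih => have := hgdesc k; omega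
  have := hbound (g 0 + 1)
  omega

private lemma range_pow_le_radIter (r : Module.End Λ M)
    (h : LinearMap.range r ≤ radIter Λ M 1) :
    ∀ k, LinearMap.range (r ^ k) ≤ radIter Λ M k := by
  intro k
  induction k with
  | zero => exact le_top
  | succ k ih =>
    rw [pow_succ, Module.End.mul_eq_comp, LinearMap.range_comp]
    calc Submodule.map (r ^ k) (LinearMap.range r)
        ≤ Submodule.map (r ^ k) (radIter Λ M 1) := Submodule.map_mono h
      _ = Ideal.jacobson (⊥ : Ideal Λ) • Submodule.map (r ^ k) (radIter Λ M 0) := by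
          rw [radIter_succ, Submodule.map_smul'']
      _ ≤ Ideal.jacobson (⊥ : Ideal Λ) • LinearMap.range (r ^ k) := by
          rw [show radIter Λ M 0 = ⊤ from rfl, Submodule.map_top]
      _ ≤ Ideal.jacobson (⊥ : Ideal Λ) • radIter Λ M k := Submodule.smul_mono le_rfl ih
      _ = radIter Λ M (k + 1) := (radIter_succ k).symm

end Aux2
open Submodule

section Aux3

variable {Λ : Type} [Ring Λ] {e : Λ}

private def ehat (e : Λ) : ↥(Ideal.span ({e} : Set Λ)) :=
  ⟨e, Submodule.mem_span_singleton_self e⟩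

private lemma exists_smul_ehat (z : ↥(Ideal.span ({e} : Set Λ))) :
    ∃ c : Λ, c • ehat e = z := by
  obtain ⟨c, hc⟩ := Submodule.mem_span_singleton.mp z.2
  exact ⟨c, Subtype.ext (by simpa [ehat] using hc)⟩

private lemma val_mul_e (he : IsIdempotentElem e) (z : ↥(Ideal.span ({e} : Set Λ))) :
    (z : Λ) * e = (z : Λ) := by
  obtain ⟨c, hc⟩ := Submodule.mem_span_singleton.mp z.2
  rw [← hc, smul_eq_mul, mul_assoc, he.eq]

private lemma projective_span_idem (he : IsIdempotentElem e) :
    Module.Projective Λ ↥(Ideal.span ({e} : Set Λ)) := by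
  refine Module.Projective.of_split (Ideal.span ({e} : Set Λ)).subtype
    (LinearMap.codRestrict _ (LinearMap.toSpanSingleton Λ Λ e)
      (fun c => Submodule.mem_span_singleton.mpr ⟨c, rfl⟩)) ?_
  apply LinearMap.ext
  intro z
  apply Subtype.ext
  show (z : Λ) * e = (z : Λ)
  exact val_mul_e he z

private lemma end_idem_trivial (hprim : IsPrimitiveIdempotent e)
    {u : Module.End Λ ↥(Ideal.span ({e} : Set Λ))} (hu : IsIdempotentElem u) :
    u = 0 ∨ u = 1 := by
  obtain ⟨he, hne, hnd⟩ := hprim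
  set b : Λ := ((u (ehat e)) : Λ) with hb
  have hbe : b * e = b := val_mul_e he (u (ehat e))
  have hee : e • ehat e = ehat e := Subtype.ext (by simpa [ehat, smul_eq_mul] using he.eq)
  have heb : e * b = b := by
    have h1 : u (e • ehat e) = u (ehat e) := congrArg u hee
    rw [u.map_smul] at h1
    simpa [smul_eq_mul] using congrArg Subtype.val h1
  have hue : u (ehat e) = b • ehat e := by
    apply Subtype.ext
    show b = _
    simp [ehat, smul_eq_mul, hbe]
  have hbb : IsIdempotentElem b := by
    have h2 : u (u (ehat e)) = u (ehat e) := by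
      calc u (u (ehat e)) = (u * u) (ehat e) := (Module.End.mul_apply u u (ehat e)).symm
        _ = u (ehat e) := by rw [hu.eq]
    rw [hue, u.map_smul, hue] at h2
    have h3 := congrArg Subtype.val h2
    show b * b = b
    simpa [ehat, smul_eq_mul, mul_assoc, hbe] using h3
  by_cases hb0 : b = 0
  · left
    have hu0 : u (ehat e) = 0 := by rw [hue, hb0, zero_smul]
    ext z
    obtain ⟨c, rfl⟩ := exists_smul_ehat z
    rw [map_smul, hu0, smul_zero]
    rfl
  by_cases he0 : e - b = 0
  · right
    have hbeq : b = e := (sub_eq_zero.mp he0).symm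
    have hu1 : u (ehat e) = ehat e := by rw [hue, hbeq, hee]
    ext z
    obtain ⟨c, rfl⟩ := exists_smul_ehat z
    rw [map_smul, hu1]
    rfl
  exfalso
  refine hnd ⟨b, e - b, hbb, ?_, hb0, he0, ?_, ?_, ?_⟩
  · show (e - b) * (e - b) = e - b
    rw [mul_sub, sub_mul, sub_mul, he.eq, heb, hbe, hbb.eq]
    abel
  · rw [mul_sub, hbe, hbb.eq, sub_self]
  · rw [sub_mul, heb, hbb.eq, sub_self]
  · rw [add_sub_cancel]

end Aux3

section Main

variable {Λ : Type} [Ring Λ]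

private lemma proj_left {Q : Type} [AddCommGroup Q] [Module Λ Q] {N₁ N₂ : Submodule Λ Q}
    (hc : IsCompl N₁ N₂) {y : Q} (hy : y ∈ N₁) :
    (N₁.subtype ∘ₗ N₁.projectionOnto N₂ hc) y = y := by
  show ((N₁.projectionOnto N₂ hc) y : Q) = y
  rw [show y = ((⟨y, hy⟩ : N₁) : Q) from rfl, Submodule.projectionOnto_apply_left hc]

private lemma proj_right {Q : Type} [AddCommGroup Q] [Module Λ Q] {N₁ N₂ : Submodule Λ Q}
    (hc : IsCompl N₁ N₂) {y : Q} (hy : y ∈ N₂) :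
    (N₁.subtype ∘ₗ N₁.projectionOnto N₂ hc) y = 0 := by
  show ((N₁.projectionOnto N₂ hc) y : Q) = 0
  rw [show y = ((⟨y, hy⟩ : N₂) : Q) from rfl, Submodule.projectionOnto_apply_right hc]
  rfl

private lemma proj_idem {Q : Type} [AddCommGroup Q] [Module Λ Q] {N₁ N₂ : Submodule Λ Q}
    (hc : IsCompl N₁ N₂) :
    IsIdempotentElem (N₁.subtype ∘ₗ N₁.projectionOnto N₂ hc) := by
  apply LinearMap.ext
  intro y
  show (N₁.subtype ∘ₗ N₁.projectionOnto N₂ hc)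
      ((N₁.subtype ∘ₗ N₁.projectionOnto N₂ hc) y) = _
  exact proj_left hc ((N₁.projectionOnto N₂ hc) y).2

end Main

/-- If `e`, `f` are primitive idempotents of a finite-dimensional algebra `Λ` with Jacobson
radical `J`, and `a` is a nonzero element of `fJe`, then the left module `Λe/Λa` is
indecomposable and not projective. -/
theorem cyclicQuot_indecomposable_not_projective
    (K Λ : Type) [Field K] [Ring Λ] [Algebra K Λ] [FiniteDimensional K Λ]
    (e f a : Λ) (he : IsPrimitiveIdempotent e) (hf : IsPrimitiveIdempotent f)
    (ha : a ≠ 0) (haJ : ∃ x ∈ Ideal.jacobson (⊥ : Ideal Λ), a = f * x * e) :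
    IsIndecomposableModule Λ (cyclicQuot Λ e a) ∧
      ¬ Module.Projective Λ (cyclicQuot Λ e a) := by
  obtain ⟨x, hxJ, hax⟩ := haJ
  have heI : IsIdempotentElem e := he.1
  haveI hMproj : Module.Projective Λ ↥(Ideal.span ({e} : Set Λ)) := projective_span_idem heI
  haveI hMfd : FiniteDimensional K ↥(Ideal.span ({e} : Set Λ)) :=
    FiniteDimensional.of_injective
      ((Ideal.span ({e} : Set Λ)).subtype.restrictScalars K) Subtype.coe_injective
  set kera : Submodule Λ ↥(Ideal.span ({e} : Set Λ)) :=
    Submodule.comap (Ideal.span ({e} : Set Λ)).subtype (Ideal.span ({a} : Set Λ)) with hkera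
  -- the kernel lies in the radical
  have hkerarad : kera ≤ radIter Λ ↥(Ideal.span ({e} : Set Λ)) 1 := by
    intro z hz
    obtain ⟨c, hc⟩ := Submodule.mem_span_singleton.mp hz
    have hc' : c * a = (z : Λ) := by simpa [smul_eq_mul] using hc
    have hz2 : z = (c * (f * x)) • ehat e := by
      apply Subtype.ext
      show (z : Λ) = (c * (f * x)) * e
      rw [← hc', hax]
      simp only [mul_assoc]
    rw [hz2, radIter_succ]
    exact Submodule.smul_mem_smul
      (Ideal.mul_mem_left _ c (Ideal.mul_mem_left _ f hxJ)) Submodule.mem_top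
  obtain ⟨n, hn⟩ := exists_radIter_eq_bot (Λ := Λ) (M := ↥(Ideal.span ({e} : Set Λ))) K
  have hene : ehat e ≠ (0 : ↥(Ideal.span ({e} : Set Λ))) := by
    intro h0
    exact he.2.1 (by simpa [ehat] using congrArg Subtype.val h0)
  have hkeratop : kera ≠ ⊤ := by
    intro htop
    have h1 : (⊤ : Submodule Λ ↥(Ideal.span ({e} : Set Λ))) ≤
        radIter Λ ↥(Ideal.span ({e} : Set Λ)) 1 := by
      intro z _
      obtain ⟨c, rfl⟩ := exists_smul_ehat z
      exact Submodule.smul_mem _ c (hkerarad (htop ▸ Submodule.mem_top))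
    have h2 : ∀ k, (⊤ : Submodule Λ ↥(Ideal.span ({e} : Set Λ))) ≤
        radIter Λ ↥(Ideal.span ({e} : Set Λ)) k := by
      intro k
      induction k with
      | zero => exact le_rfl
      | succ k ih =>
        refine le_trans h1 ?_
        rw [radIter_succ]
        exact Submodule.smul_mono le_rfl (le_trans le_top ih)
    have h3 := h2 n
    rw [hn] at h3
    exact hene ((Submodule.mem_bot _).mp (h3 Submodule.mem_top))
  haveI hQnt : Nontrivial (cyclicQuot Λ e a) :=
    Submodule.Quotient.nontrivial_iff.mpr hkeratop
  constructor
  · -- indecomposable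
    refine ⟨hQnt, ?_⟩
    intro N₁ N₂ hc
    set p : Module.End Λ (cyclicQuot Λ e a) :=
      N₁.subtype ∘ₗ N₁.projectionOnto N₂ hc with hp
    have hpidem : IsIdempotentElem p := proj_idem hc
    obtain ⟨q, hq⟩ := Module.projective_lifting_property kera.mkQ (p ∘ₗ kera.mkQ)
      (Submodule.mkQ_surjective kera)
    have hq' : ∀ z, kera.mkQ (q z) = p (kera.mkQ z) := fun z => LinearMap.congr_fun hq z
    have hcomm : ∀ (k : ℕ) z, kera.mkQ ((q ^ k) z) = (p ^ k) (kera.mkQ z) := by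
      intro k
      induction k with
      | zero => intro z; simp
      | succ k ih =>
        intro z
        rw [pow_succ', pow_succ', Module.End.mul_apply, Module.End.mul_apply, hq', ih]
    set r : Module.End Λ ↥(Ideal.span ({e} : Set Λ)) := q - q * q with hr
    have hrange : LinearMap.range r ≤ radIter Λ ↥(Ideal.span ({e} : Set Λ)) 1 := by
      refine le_trans ?_ hkerarad
      rintro _ ⟨z, rfl⟩
      show r z ∈ kera
      rw [← Submodule.ker_mkQ kera, LinearMap.mem_ker]
      have h4 : kera.mkQ ((q * q) z) = kera.mkQ (q z) := by
        rw [Module.End.mul_apply, hq', hq', ← Module.End.mul_apply p p, hpidem.eq]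
      rw [hr, LinearMap.sub_apply, map_sub, h4, sub_self]
    have hrn : r ^ (n + 1) = 0 := by
      have h1 := range_pow_le_radIter r hrange (n + 1)
      rw [radIter_succ, hn, Submodule.smul_bot, le_bot_iff] at h1
      exact LinearMap.range_eq_bot.mp h1
    have hqsub : (q - q ^ 2) ^ (n + 1) = 0 := by
      rw [pow_two, ← hr]
      exact hrn
    have huidem : IsIdempotentElem (1 - (1 - q ^ (n + 1)) ^ (n + 1)) :=
      isIdempotentElem_one_sub_one_sub_pow_pow q (n + 1) hqsub
    have hstep : ∀ w, kera.mkQ ((1 - q ^ (n + 1)) w) = (1 - p ^ (n + 1)) (kera.mkQ w) := by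
      intro w
      rw [LinearMap.sub_apply, LinearMap.sub_apply, map_sub, hcomm (n + 1) w]
      simp
    have hpow : ∀ (k : ℕ) (w : ↥(Ideal.span ({e} : Set Λ))),
        kera.mkQ ((((1 : Module.End Λ ↥(Ideal.span ({e} : Set Λ))) - q ^ (n + 1)) ^ k) w) =
        (((1 : Module.End Λ (cyclicQuot Λ e a)) - p ^ (n + 1)) ^ k) (kera.mkQ w) := by
      intro k
      induction k with
      | zero => intro w; simp
      | succ k ih =>
        intro w
        rw [pow_succ' ((1 : Module.End Λ ↥(Ideal.span ({e} : Set Λ))) - q ^ (n + 1)) k,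
          pow_succ' ((1 : Module.End Λ (cyclicQuot Λ e a)) - p ^ (n + 1)) k,
          Module.End.mul_apply, Module.End.mul_apply, hstep, ih]
    have hiden : (1 - (1 - p ^ (n + 1)) ^ (n + 1)) = p := by
      rw [hpidem.pow_succ_eq n, (hpidem.one_sub).pow_succ_eq n, sub_sub_cancel]
    have hπu : ∀ z, kera.mkQ ((1 - (1 - q ^ (n + 1)) ^ (n + 1)) z) = p (kera.mkQ z) := by
      intro z
      have h9 := DFunLike.congr_fun hiden (kera.mkQ z)
      rw [LinearMap.sub_apply, map_sub, hpow (n + 1) z, Module.End.one_apply, ← h9,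
        LinearMap.sub_apply, Module.End.one_apply]
    rcases end_idem_trivial he huidem with hu0 | hu1
    · left
      rw [eq_bot_iff]
      intro y hy
      obtain ⟨z, rfl⟩ := Submodule.mkQ_surjective kera y
      have h0 : p (kera.mkQ z) = 0 := by
        rw [← hπu z, hu0]
        simp
      have hpy : p (kera.mkQ z) = kera.mkQ z := proj_left hc hy
      rw [Submodule.mem_bot, ← hpy, h0]
    · right
      rw [eq_bot_iff]
      intro y hy
      obtain ⟨z, rfl⟩ := Submodule.mkQ_surjective kera y
      have h0 : p (kera.mkQ z) = kera.mkQ z := by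
        rw [← hπu z, hu1]
        simp
      have hpy : p (kera.mkQ z) = 0 := proj_right hc hy
      rw [Submodule.mem_bot, ← h0, hpy]
  · -- not projective
    intro hproj
    haveI := hproj
    obtain ⟨σ, hσ⟩ := Module.projective_lifting_property kera.mkQ LinearMap.id
      (Submodule.mkQ_surjective kera)
    have hσ' : ∀ y, kera.mkQ (σ y) = y := fun y => LinearMap.congr_fun hσ y
    set w : Module.End Λ ↥(Ideal.span ({e} : Set Λ)) := σ ∘ₗ kera.mkQ with hw
    have hwidem : IsIdempotentElem w := by
      apply LinearMap.ext
      intro z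
      show σ (kera.mkQ (σ (kera.mkQ z))) = σ (kera.mkQ z)
      rw [hσ']
    rcases end_idem_trivial he hwidem with hw0 | hw1
    · obtain ⟨y₁, y₂, hy⟩ := hQnt
      obtain ⟨z₁, rfl⟩ := Submodule.mkQ_surjective kera y₁
      obtain ⟨z₂, rfl⟩ := Submodule.mkQ_surjective kera y₂
      have h0 : ∀ z, kera.mkQ z = 0 := by
        intro z
        have h6 := hσ' (kera.mkQ z)
        rw [show σ (kera.mkQ z) = w z from rfl, hw0] at h6
        simpa using h6.symm
      exact hy (by rw [h0 z₁, h0 z₂])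
    · have hamem : a ∈ Ideal.span ({e} : Set Λ) := by
        refine Submodule.mem_span_singleton.mpr ⟨f * x, ?_⟩
        rw [smul_eq_mul, hax, mul_assoc]
      have hmem : (⟨a, hamem⟩ : ↥(Ideal.span ({e} : Set Λ))) ∈ kera :=
        Submodule.mem_span_singleton_self a
      have h7 : kera.mkQ ⟨a, hamem⟩ = 0 := by
        rw [show (0 : cyclicQuot Λ e a) = kera.mkQ 0 from (map_zero _).symm]
        apply (Submodule.Quotient.eq kera).mpr
        simpa using hmem
      have h8 : (⟨a, hamem⟩ : ↥(Ideal.span ({e} : Set Λ))) = 0 := by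
        have e0 : kera.mkQ ⟨a, hamem⟩ = kera.mkQ (0 : ↥(Ideal.span ({e} : Set Λ))) := by
          rw [h7, map_zero]
        have e1 : σ (kera.mkQ ⟨a, hamem⟩) = σ (kera.mkQ 0) := congrArg σ e0
        rw [show σ (kera.mkQ (⟨a, hamem⟩ : ↥(Ideal.span ({e} : Set Λ)))) = w ⟨a, hamem⟩ from rfl,
          show σ (kera.mkQ (0 : ↥(Ideal.span ({e} : Set Λ)))) = w 0 from rfl, hw1] at e1
        simpa using e1
      exact ha (by simpa using congrArg Subtype.val h8)
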